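/- Assume moreover that 1 < β ≤ 2. Then for every n ≥ 1 one has κ(n) ≤ F(n+2), where F(n) is the n-th Fibonacci number (F(0) = 0, F(1) = 1, F(n) = F(n−1) + F(n−2)). -/

import Mathlib

open MeasureTheory Set

/-- The greedy β-transformation with deleted digit set `{0, a₁, a₂}`:
`T x = βx` on `Δ(0) = [0, a₁/β)`, `T x = βx − a₁` on `Δ(a₁) = [a₁/β, a₂/β)`,
and `T x = βx − a₂` on `Δ(a₂) = [a₂/β, a₁)`. -/
noncomputable def greedyT (β a₁ a₂ : ℝ) (x : ℝ) : ℝ :=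
  if x < a₁ / β then β * x
  else if x < a₂ / β then β * x - a₁
  else β * x - a₂

/-- The interval `Δ(b)` associated to a digit `b ∈ {0, a₁, a₂}`. -/
noncomputable def digitInt (β a₁ a₂ : ℝ) (b : ℝ) : Set ℝ :=
  if b = 0 then Set.Ico 0 (a₁ / β)
  else if b = a₁ then Set.Ico (a₁ / β) (a₂ / β)
  else Set.Ico (a₂ / β) a₁

/-- The fundamental interval `Δ(w) = ⋂_{k < n} T⁻ᵏ Δ(b_k)` of a word
`w = (b₀, …, b_{n−1})`. -/
noncomputable def cyl (β a₁ a₂ : ℝ) (w : List ℝ) : Set ℝ :=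
  ⋂ k ∈ Finset.range w.length,
    (greedyT β a₁ a₂)^[k] ⁻¹' digitInt β a₁ a₂ (w.getD k 0)

/-- `w` is a word over the alphabet `A = {0, a₁, a₂}`. -/
def isWord (a₁ a₂ : ℝ) (w : List ℝ) : Prop := ∀ b ∈ w, b = 0 ∨ b = a₁ ∨ b = a₂

/-- The fundamental interval `Δ(w)` is full: `λ(Δ(w)) = a₁/β^|w|`. -/
def isFull (β a₁ a₂ : ℝ) (w : List ℝ) : Prop :=
  volume (cyl β a₁ a₂ w) = ENNReal.ofReal (a₁ / β ^ w.length)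

/-- Condition (6): `a₁ · max (β−1) 1 < a₂ < a₁ · min 2 β`. -/
def condition6 (β a₁ a₂ : ℝ) : Prop :=
  a₁ * max (β - 1) 1 < a₂ ∧ a₂ < a₁ * min 2 β

/-- `w ∈ Bₙ`: `w` is a word of length `n` over `A` with `λ(Δ(w)) > 0`, `Δ(w)`
non-full, and `Δ(w′)` non-full for every nonempty proper prefix `w′` of `w`. -/
def memB (β a₁ a₂ : ℝ) (n : ℕ) (w : List ℝ) : Prop :=
  w.length = n ∧ isWord a₁ a₂ w ∧ 0 < volume (cyl β a₁ a₂ w) ∧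
    ¬ isFull β a₁ a₂ w ∧
    ∀ w' : List ℝ, w' ≠ [] → w' <+: w → w' ≠ w → ¬ isFull β a₁ a₂ w'

/-- `κ(n)`: the number of elements of `Bₙ`. -/
noncomputable def kappa (β a₁ a₂ : ℝ) (n : ℕ) : ℕ :=
  {w : List ℝ | memB β a₁ a₂ n w}.ncard

-- AUX
noncomputable def wval (β : ℝ) (w : List ℝ) : ℝ := w.foldl (fun a b => β * a + b) 0

lemma wval_nil (β : ℝ) : wval β [] = 0 := rfl

lemma wval_append (β : ℝ) (w : List ℝ) (b : ℝ) : wval β (w ++ [b]) = β * wval β w + b := by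
  simp [wval, List.foldl_append]

noncomputable def dhi (β a₁ a₂ b : ℝ) : ℝ :=
  if b = 0 then a₁ / β else if b = a₁ then a₂ / β else a₁

section Basic
variable {β a₁ a₂ : ℝ}

lemma digit_zero : digitInt β a₁ a₂ 0 = Set.Ico 0 (a₁/β) := by simp [digitInt]

lemma digit_one (h : a₁ ≠ 0) : digitInt β a₁ a₂ a₁ = Set.Ico (a₁/β) (a₂/β) := by
  simp [digitInt, h]

lemma digit_two (h0 : a₂ ≠ 0) (h1 : a₂ ≠ a₁) : digitInt β a₁ a₂ a₂ = Set.Ico (a₂/β) a₁ := by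
  simp [digitInt, h0, h1]

lemma digit_eq (ha₁ : 0 < a₁) (h12 : a₁ < a₂) {b : ℝ} (hb : b = 0 ∨ b = a₁ ∨ b = a₂) :
    digitInt β a₁ a₂ b = Set.Ico (b/β) (dhi β a₁ a₂ b) := by
  rcases hb with rfl | rfl | rfl
  · rw [digit_zero, zero_div]; simp [dhi]
  · rw [digit_one ha₁.ne']; simp [dhi, ha₁.ne']
  · rw [digit_two (ha₁.trans h12).ne' (ne_of_gt h12)]
    simp [dhi, (ha₁.trans h12).ne', (ne_of_gt h12)]

lemma T_on_digit (hβ : 1 < β) (ha₁ : 0 < a₁) (h12 : a₁ < a₂) {b x : ℝ}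
    (hb : b = 0 ∨ b = a₁ ∨ b = a₂) (hx : x ∈ digitInt β a₁ a₂ b) :
    greedyT β a₁ a₂ x = β * x - b := by
  have hβ0 : (0:ℝ) < β := lt_trans one_pos hβ
  obtain hb | hb | hb := hb <;> subst b
  · rw [digit_zero] at hx
    simp [greedyT, hx.2]
  · rw [digit_one ha₁.ne'] at hx
    simp only [greedyT]
    rw [if_neg (not_lt.mpr hx.1), if_pos hx.2]
  · rw [digit_two (ha₁.trans h12).ne' (ne_of_gt h12)] at hx
    have h1 : a₁/β ≤ a₂/β := by gcongr
    simp only [greedyT]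
    rw [if_neg (not_lt.mpr (h1.trans hx.1)), if_neg (not_lt.mpr hx.1)]

lemma cyl_nil : cyl β a₁ a₂ [] = Set.univ := by simp [cyl]

lemma cyl_singleton (b : ℝ) : cyl β a₁ a₂ [b] = digitInt β a₁ a₂ b := by
  simp [cyl]

lemma cyl_append (w : List ℝ) (b : ℝ) :
    cyl β a₁ a₂ (w ++ [b]) =
      cyl β a₁ a₂ w ∩ (greedyT β a₁ a₂)^[w.length] ⁻¹' digitInt β a₁ a₂ b := by
  have hlen : (w ++ [b]).length = w.length + 1 := by simp
  unfold cyl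
  rw [hlen, Finset.range_add_one, Finset.set_biInter_insert, Set.inter_comm]
  congr 1
  · apply Set.iInter₂_congr
    intro k hk
    rw [List.getD_append _ _ _ _ (Finset.mem_range.mp hk)]
  · simp [List.getD_eq_getElem?_getD, List.getElem?_concat_length]

lemma iter_on_cyl (hβ : 1 < β) (ha₁ : 0 < a₁) (h12 : a₁ < a₂) :
    ∀ w : List ℝ, isWord a₁ a₂ w → ∀ x ∈ cyl β a₁ a₂ w,
      (greedyT β a₁ a₂)^[w.length] x = β ^ w.length * x - wval β w := by
  intro w
  induction w using List.reverseRecOn with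
  | nil => intro _ x _; simp [wval_nil]
  | append_singleton w b ih =>
    intro hword x hx
    have hword' : isWord a₁ a₂ w := fun c hc => hword c (by simp [hc])
    have hb : b = 0 ∨ b = a₁ ∨ b = a₂ := hword b (by simp)
    rw [cyl_append] at hx
    have h1 := ih hword' x hx.1
    have h2 : (greedyT β a₁ a₂)^[w.length] x ∈ digitInt β a₁ a₂ b := hx.2
    rw [List.length_append, List.length_singleton, Function.iterate_succ_apply',
      T_on_digit hβ ha₁ h12 hb h2, h1, wval_append]
    ring

lemma cyl_child (hβ : 1 < β) (ha₁ : 0 < a₁) (h12 : a₁ < a₂) (w : List ℝ)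
    (hword : isWord a₁ a₂ w) (b : ℝ) :
    cyl β a₁ a₂ (w ++ [b]) =
      cyl β a₁ a₂ w ∩ {x | β ^ w.length * x - wval β w ∈ digitInt β a₁ a₂ b} := by
  rw [cyl_append]
  ext x
  simp only [Set.mem_inter_iff, Set.mem_preimage, Set.mem_setOf_eq]
  constructor
  · rintro ⟨h1, h2⟩
    exact ⟨h1, by rwa [iter_on_cyl hβ ha₁ h12 w hword x h1] at h2⟩
  · rintro ⟨h1, h2⟩
    exact ⟨h1, by rwa [iter_on_cyl hβ ha₁ h12 w hword x h1]⟩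

lemma affine_preimage (n : ℕ) (hβ : 0 < β) (c p q : ℝ) :
    {x : ℝ | β ^ n * x - c ∈ Set.Ico p q} = Set.Ico ((c + p)/β^n) ((c + q)/β^n) := by
  have hn : (0:ℝ) < β ^ n := pow_pos hβ n
  ext x
  simp only [Set.mem_setOf_eq, Set.mem_Ico]
  rw [div_le_iff₀ hn, lt_div_iff₀ hn]
  constructor
  · rintro ⟨h1, h2⟩
    constructor <;> nlinarith
  · rintro ⟨h1, h2⟩
    constructor <;> nlinarith

lemma memB_parent (n : ℕ) (hn : 1 ≤ n) (w : List ℝ) (b : ℝ)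
    (h : memB β a₁ a₂ (n+1) (w ++ [b])) : memB β a₁ a₂ n w := by
  obtain ⟨hlen, hword, hpos, hnf, hpre⟩ := h
  have hlw : w.length = n := by simpa using hlen
  have hwne : w ≠ [] := by
    intro h0
    rw [h0] at hlw
    simp at hlw
    omega
  have hne : w ≠ w ++ [b] := fun he => by simpa using congrArg List.length he
  refine ⟨hlw, fun c hc => hword c (List.mem_append_left _ hc), ?_, ?_, ?_⟩
  · refine lt_of_lt_of_le hpos (measure_mono ?_)
    rw [cyl_append]
    exact Set.inter_subset_left
  · exact hpre w hwne ⟨[b], rfl⟩ hne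
  · intro w' h1 h2 h3
    exact hpre w' h1 (h2.trans ⟨[b], rfl⟩) fun he => by
      have := congrArg List.length he
      rw [List.length_append, List.length_singleton, hlw] at this
      have := h2.length_le
      omega

lemma child_Ico (hβ : 1 < β) (ha₁ : 0 < a₁) (h12 : a₁ < a₂) (w : List ℝ)
    (hword : isWord a₁ a₂ w) {b : ℝ} (hb : b = 0 ∨ b = a₁ ∨ b = a₂) {t : ℝ}
    (hcyl : cyl β a₁ a₂ w =
      Set.Ico (wval β w / β ^ w.length) ((wval β w + t) / β ^ w.length)) :
    cyl β a₁ a₂ (w ++ [b]) =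
      Set.Ico ((wval β w + b/β) / β ^ w.length)
        ((wval β w + min t (dhi β a₁ a₂ b)) / β ^ w.length) := by
  have hβ0 : (0:ℝ) < β := lt_trans one_pos hβ
  have hn : (0:ℝ) < β ^ w.length := pow_pos hβ0 _
  have hb0 : 0 ≤ b := by rcases hb with h | h | h <;> rw [h] <;> linarith
  rw [cyl_child hβ ha₁ h12 w hword b, hcyl, digit_eq ha₁ h12 hb,
    affine_preimage _ hβ0, Set.Ico_inter_Ico]
  have h1 : max (wval β w / β ^ w.length) ((wval β w + b/β) / β ^ w.length)
      = (wval β w + b/β) / β ^ w.length :=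
    max_eq_right ((div_le_div_iff_of_pos_right hn).mpr
      (le_add_of_nonneg_right (by positivity)))
  have h2 : min ((wval β w + t) / β ^ w.length)
      ((wval β w + dhi β a₁ a₂ b) / β ^ w.length)
      = (wval β w + min t (dhi β a₁ a₂ b)) / β ^ w.length := by
    rw [min_div_div_right hn.le, ← min_add_add_left]
  rw [h1, h2]

lemma cyl_volume {c t : ℝ} {n : ℕ} (hβ0 : (0:ℝ) < β) (w : List ℝ) (hn : w.length = n)
    (hcyl : cyl β a₁ a₂ w = Set.Ico (c / β ^ n) ((c + t) / β ^ n)) :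
    volume (cyl β a₁ a₂ w) = ENNReal.ofReal (t / β ^ n) := by
  rw [hcyl, Real.volume_Ico]
  congr 1
  ring

lemma struct (hβ1 : 1 < β) (hβ2 : β ≤ 2) (ha₁ : 0 < a₁) (h12 : a₁ < a₂)
    (h2β : a₂ < β * a₁) :
    ∀ n : ℕ, 1 ≤ n → ∀ w : List ℝ, memB β a₁ a₂ n w →
      ∃ t : ℝ, 0 < t ∧ t < a₁ ∧
        cyl β a₁ a₂ w = Set.Ico (wval β w / β ^ n) ((wval β w + t) / β ^ n) := by
  have hβ0 : (0:ℝ) < β := lt_trans one_pos hβ1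
  intro n
  induction n with
  | zero => omega
  | succ m ih =>
    intro _ w hw
    rcases Nat.eq_zero_or_pos m with rfl | hm
    · -- base case : n = 1
      obtain ⟨b, rfl⟩ := List.length_eq_one_iff.mp hw.1
      have hb : b = 0 ∨ b = a₁ ∨ b = a₂ := hw.2.1 b (by simp)
      have hval : wval β [b] = b := by simp [wval]
      obtain hb | hb | hb := hb <;> subst b
      · exfalso
        apply hw.2.2.2.1
        rw [isFull, cyl_singleton, digit_zero, Real.volume_Ico]
        norm_num
      · refine ⟨a₂ - a₁, by linarith, by nlinarith, ?_⟩
        rw [cyl_singleton, digit_one ha₁.ne', hval, pow_one]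
        congr 1
        ring
      · refine ⟨β * a₁ - a₂, by linarith, by nlinarith, ?_⟩
        rw [cyl_singleton, digit_two (ha₁.trans h12).ne' (ne_of_gt h12), hval, pow_one]
        congr 1
        field_simp
        ring
      -- step case
    · have hwne : w ≠ [] := by
        intro h0
        have := hw.1
        rw [h0] at this
        simp at this
      have hdec : w.dropLast ++ [w.getLastD 0] = w := by
        rw [List.getLastD_eq_getLast?, List.getLast?_eq_getLast hwne]
        exact List.dropLast_append_getLast hwne
      set w₀ := w.dropLast with hw₀
      set b := w.getLastD 0 with hbdef
      have hw' : memB β a₁ a₂ (m+1) (w₀ ++ [b]) := by rw [hdec]; exact hw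
      have hpar : memB β a₁ a₂ m w₀ := memB_parent m hm w₀ b hw'
      have hlen₀ : w₀.length = m := hpar.1
      have hb : b = 0 ∨ b = a₁ ∨ b = a₂ := hw.2.1 b (by rw [← hdec]; simp)
      obtain ⟨t, ht0, ht1, hcyl⟩ := ih hm w₀ hpar
      rw [← hlen₀] at hcyl
      have hchild := child_Ico hβ1 ha₁ h12 w₀ hpar.2.1 hb hcyl
      set q := dhi β a₁ a₂ b with hq
      set r := min t q - b/β with hr
      have hb0 : 0 ≤ b := by rcases hb with h | h | h <;> rw [h] <;> linarith
      have hn0 : (0:ℝ) < β ^ m := pow_pos hβ0 m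
      have hvol : volume (cyl β a₁ a₂ (w₀ ++ [b])) = ENNReal.ofReal (r / β ^ m) := by
        rw [hchild, hlen₀, Real.volume_Ico]
        congr 1
        rw [hr]
        ring
      have hrpos : 0 < r := by
        have h0 := hw.2.2.1
        rw [← hdec, hvol] at h0
        have h1 := ENNReal.ofReal_pos.mp h0
        rcases div_pos_iff.mp h1 with ⟨h, _⟩ | ⟨_, h⟩
        · exact h
        · linarith
      have hβa : β * a₁ ≤ 2 * a₁ := by nlinarith
      have hkey : (a₁/β)/β^m = a₁/β^(m+1) := by rw [div_div, pow_succ, mul_comm]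
      have hnfull : r ≠ a₁ / β := by
        intro hreq
        apply hw.2.2.2.1
        have hlenw : w.length = m + 1 := hw.1
        rw [isFull, hlenw, ← hdec, hvol, hreq, hkey]
      refine ⟨β * r, by positivity, ?_, ?_⟩
      · rcases hb with hbe | hbe | hbe
        · have hq' : q = a₁/β := by rw [hq, hbe]; simp [dhi]
          have h3 : r ≤ a₁/β := by
            rw [hr, hq', hbe]
            simpa using min_le_right t (a₁/β)
          have h4 : r < a₁/β := lt_of_le_of_ne h3 hnfull
          calc β * r < β * (a₁/β) := by nlinarith
          _ = a₁ := by field_simp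
        · have hq' : q = a₂/β := by rw [hq, hbe]; simp [dhi, ha₁.ne']
          have h3 : r ≤ a₂/β - a₁/β := by
            rw [hr, hq', hbe]
            exact sub_le_sub_right (min_le_right _ _) _
          have h4 : β * (a₂/β - a₁/β) = a₂ - a₁ := by field_simp
          have h5 : β * r ≤ a₂ - a₁ := by
            rw [← h4]
            exact mul_le_mul_of_nonneg_left h3 hβ0.le
          linarith
        · have hq' : q = a₁ := by
            rw [hq, hbe]
            simp [dhi, (ha₁.trans h12).ne', (ne_of_gt h12)]
          have h3 : r = t - a₂/β := by
            rw [hr, hq', hbe, min_eq_left ht1.le]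
          have h4 : β * (a₂/β) = a₂ := by field_simp
          have h5 : β * (t - a₂/β) < β * a₁ - a₂ := by nlinarith
          rw [h3]
          linarith
      · have hβne : β ≠ 0 := hβ0.ne'
        have hmne : (β:ℝ)^m ≠ 0 := hn0.ne'
        have e1 : wval β (w₀ ++ [b]) / β^(m+1) = (wval β w₀ + b/β)/β^m := by
          rw [wval_append, pow_succ]
          field_simp
        have e2 : (wval β (w₀ ++ [b]) + β*r) / β^(m+1) = (wval β w₀ + min t q)/β^m := by
          rw [wval_append, hr, pow_succ]
          field_simp
          ring
        rw [← hdec, hchild, hlen₀, e1, e2]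

def isBigB (β a₁ a₂ : ℝ) (w : List ℝ) : Prop :=
  ENNReal.ofReal (a₂ / β ^ (w.length + 1)) < volume (cyl β a₁ a₂ w)

lemma bigB_iff (hβ1 : 1 < β) {w : List ℝ} {t : ℝ} {n : ℕ}
    (hlen : w.length = n) (ht0 : 0 < t)
    (hcyl : cyl β a₁ a₂ w = Set.Ico (wval β w / β ^ n) ((wval β w + t) / β ^ n)) :
    (isBigB β a₁ a₂ w ↔ a₂ / β < t) := by
  have hβ0 : (0:ℝ) < β := lt_trans one_pos hβ1
  have hn0 : (0:ℝ) < β ^ n := pow_pos hβ0 n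
  have hvol : volume (cyl β a₁ a₂ w) = ENNReal.ofReal (t / β ^ n) :=
    cyl_volume hβ0 w hlen hcyl
  have hkey : a₂ / β ^ (n+1) = (a₂/β) / β ^ n := by rw [div_div, pow_succ, mul_comm]
  rw [isBigB, hlen, hvol, hkey]
  constructor
  · intro h
    by_contra hle
    push_neg at hle
    exact absurd h (not_lt.mpr (ENNReal.ofReal_le_ofReal (by gcongr)))
  · intro h
    rw [ENNReal.ofReal_lt_ofReal_iff (by positivity)]
    gcongr

lemma classify (hβ1 : 1 < β) (hβ2 : β ≤ 2) (ha₁ : 0 < a₁) (h12 : a₁ < a₂)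
    (h2β : a₂ < β * a₁) {n : ℕ} {w₀ : List ℝ} {b : ℝ}
    (hpar : memB β a₁ a₂ n w₀) {t : ℝ} (ht0 : 0 < t) (ht1 : t < a₁)
    (hcyl : cyl β a₁ a₂ w₀ = Set.Ico (wval β w₀ / β ^ n) ((wval β w₀ + t) / β ^ n))
    (hch : memB β a₁ a₂ (n+1) (w₀ ++ [b])) :
    ((b = 0 ∧ t < a₁/β) ∨ (b = a₁ ∧ a₁/β < t) ∨ (b = a₂ ∧ a₂/β < t))
      ∧ (isBigB β a₁ a₂ (w₀ ++ [b]) → b = 0 ∨ b = a₂) := by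
  have hβ0 : (0:ℝ) < β := lt_trans one_pos hβ1
  have hn0 : (0:ℝ) < β ^ n := pow_pos hβ0 n
  have hb : b = 0 ∨ b = a₁ ∨ b = a₂ := hch.2.1 b (by simp)
  have hlen₀ : w₀.length = n := hpar.1
  rw [← hlen₀] at hcyl
  have hchild := child_Ico hβ1 ha₁ h12 w₀ hpar.2.1 hb hcyl
  set q := dhi β a₁ a₂ b with hq
  set r := min t q - b/β with hr
  have hvol : volume (cyl β a₁ a₂ (w₀ ++ [b])) = ENNReal.ofReal (r / β ^ n) := by
    rw [hchild, hlen₀, Real.volume_Ico]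
    congr 1
    rw [hr]
    ring
  have hrpos : 0 < r := by
    have h0 := hch.2.2.1
    rw [hvol] at h0
    rcases div_pos_iff.mp (ENNReal.ofReal_pos.mp h0) with ⟨h, _⟩ | ⟨_, h⟩
    · exact h
    · linarith
  constructor
  · rcases hb with hbe | hbe | hbe
    · left
      refine ⟨hbe, ?_⟩
      have hq' : q = a₁/β := by rw [hq, hbe]; simp [dhi]
      have hnfull : r ≠ a₁ / β := by
        intro hreq
        apply hch.2.2.2.1
        have hlenw : (w₀ ++ [b]).length = n + 1 := by simp [hlen₀]
        rw [isFull, hlenw, hvol, hreq, div_div, pow_succ, mul_comm]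
      by_contra hge
      push_neg at hge
      apply hnfull
      rw [hr, hq', hbe, min_eq_right hge]
      ring
    · right; left
      refine ⟨hbe, ?_⟩
      have h1 : b/β < min t q := by rw [hr] at hrpos; linarith
      have h2 : a₁/β < min t q := by rw [← hbe]; exact h1
      exact lt_of_lt_of_le h2 (min_le_left _ _)
    · right; right
      refine ⟨hbe, ?_⟩
      have h1 : b/β < min t q := by rw [hr] at hrpos; linarith
      have h2 : a₂/β < min t q := by rw [← hbe]; exact h1
      exact lt_of_lt_of_le h2 (min_le_left _ _)
  · intro hbig
    rcases hb with hbe | hbe | hbe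
    · exact Or.inl hbe
    · exfalso
      have ha₂ : (0:ℝ) < a₂ := lt_trans ha₁ h12
      have hq' : q = a₂/β := by rw [hq, hbe]; simp [dhi, ha₁.ne']
      have h3 : r ≤ a₂/β - a₁/β := by
        rw [hr, hq', hbe]
        exact sub_le_sub_right (min_le_right _ _) _
      have s1 : (β-1)*a₂ ≤ a₂ := by nlinarith
      have s2 : β*(a₂ - a₁) ≤ a₂ := by nlinarith
      have h4 : r * (β*β) ≤ a₂ := by
        have h6 := mul_le_mul_of_nonneg_right h3 (le_of_lt (mul_pos hβ0 hβ0))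
        have hee : (a₂/β - a₁/β)*(β*β) = β*(a₂ - a₁) := by field_simp
        rw [hee] at h6
        linarith
      have hkey : a₂ / β ^ (n+2) = a₂/(β^n * (β*β)) := by rw [pow_add, pow_two]
      have h5 : r/β^n ≤ a₂/β^(n+2) := by
        rw [hkey, div_le_div_iff₀ hn0 (by positivity)]
        nlinarith [mul_le_mul_of_nonneg_right h4 hn0.le]
      apply absurd hbig
      have hlenw : (w₀ ++ [b]).length = n + 1 := by simp [hlen₀]
      rw [isBigB, hlenw, hvol]
      exact not_lt.mpr (ENNReal.ofReal_le_ofReal h5)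
    · exact Or.inr hbe

lemma decomp_last {w : List ℝ} (hwne : w ≠ []) :
    w.dropLast ++ [w.getLastD 0] = w := by
  rw [List.getLastD_eq_getLast?, List.getLast?_eq_getLast hwne]
  exact List.dropLast_append_getLast hwne

lemma last_classify (hβ1 : 1 < β) (hβ2 : β ≤ 2) (ha₁ : 0 < a₁) (h12 : a₁ < a₂)
    (h2β : a₂ < β * a₁) {n : ℕ} (hn : 1 ≤ n) {w : List ℝ}
    (hw : memB β a₁ a₂ (n+1) w) :
    ∃ t : ℝ, memB β a₁ a₂ n w.dropLast ∧ 0 < t ∧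
      volume (cyl β a₁ a₂ w.dropLast) = ENNReal.ofReal (t / β ^ n) ∧
      ((w.getLastD 0 = 0 ∧ t < a₁/β) ∨ (w.getLastD 0 = a₁ ∧ a₁/β < t) ∨
        (w.getLastD 0 = a₂ ∧ a₂/β < t)) ∧
      (isBigB β a₁ a₂ w → w.getLastD 0 = 0 ∨ w.getLastD 0 = a₂) ∧
      (a₂/β < t → isBigB β a₁ a₂ w.dropLast) := by
  have hβ0 : (0:ℝ) < β := lt_trans one_pos hβ1
  have hwne : w ≠ [] := by
    intro h0
    have := hw.1
    rw [h0] at this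
    simp at this
  have hdec := decomp_last hwne
  have hw' : memB β a₁ a₂ (n+1) (w.dropLast ++ [w.getLastD 0]) := by
    rw [hdec]; exact hw
  have hpar : memB β a₁ a₂ n w.dropLast := memB_parent n hn _ _ hw'
  obtain ⟨t, ht0, ht1, hcyl⟩ := struct hβ1 hβ2 ha₁ h12 h2β n hn _ hpar
  have hclass := classify hβ1 hβ2 ha₁ h12 h2β hpar ht0 ht1 hcyl hw'
  refine ⟨t, hpar, ht0, cyl_volume hβ0 _ hpar.1 hcyl, hclass.1, ?_, ?_⟩
  · intro hbig
    exact hclass.2 (by rwa [hdec])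
  · intro hlt
    exact (bigB_iff hβ1 hpar.1 ht0 hcyl).mpr hlt

lemma t_unique {n : ℕ} (hβ0 : (0:ℝ) < β) {t₁ t₂ : ℝ} (h1 : 0 < t₁) (h2 : 0 < t₂)
    (hv : ENNReal.ofReal (t₁ / β ^ n) = ENNReal.ofReal (t₂ / β ^ n)) : t₁ = t₂ := by
  have hn0 : (0:ℝ) < β ^ n := pow_pos hβ0 n
  have h := (ENNReal.ofReal_eq_ofReal_iff (by positivity) (by positivity)).mp hv
  field_simp at h
  exact h

lemma last_eq (hβ0 : (0:ℝ) < β) (ha₁ : 0 < a₁) (h12 : a₁ < a₂) {t x y : ℝ}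
    (hx : (x = 0 ∧ t < a₁/β) ∨ (x = a₁ ∧ a₁/β < t) ∨ (x = a₂ ∧ a₂/β < t))
    (hy : (y = 0 ∧ t < a₁/β) ∨ (y = a₁ ∧ a₁/β < t) ∨ (y = a₂ ∧ a₂/β < t))
    (hxy : x = a₂ ↔ y = a₂) : x = y := by
  have h1β : a₁/β < a₂/β := by gcongr
  rcases hx with ⟨e, ht⟩ | ⟨e, ht⟩ | ⟨e, ht⟩ <;>
    rcases hy with ⟨f, hs⟩ | ⟨f, hs⟩ | ⟨f, hs⟩
  · rw [e, f]
  · linarith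
  · linarith
  · linarith
  · rw [e, f]
  · exfalso; rw [e] at hxy; rw [f] at hxy; exact absurd (hxy.mpr rfl) h12.ne
  · linarith
  · exfalso; rw [e] at hxy; rw [f] at hxy; exact absurd (hxy.mp rfl) h12.ne
  · rw [e, f]

lemma last_eq' (hβ0 : (0:ℝ) < β) (ha₁ : 0 < a₁) (h12 : a₁ < a₂) {t x y : ℝ}
    (hx : (x = 0 ∧ t < a₁/β) ∨ (x = a₁ ∧ a₁/β < t) ∨ (x = a₂ ∧ a₂/β < t))
    (hy : (y = 0 ∧ t < a₁/β) ∨ (y = a₁ ∧ a₁/β < t) ∨ (y = a₂ ∧ a₂/β < t))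
    (hx2 : x = 0 ∨ x = a₂) (hy2 : y = 0 ∨ y = a₂) : x = y := by
  have h1β : a₁/β < a₂/β := by gcongr
  apply last_eq hβ0 ha₁ h12 hx hy
  constructor
  · intro he
    rcases hy2 with f | f
    · exfalso
      rcases hy with ⟨f', hs⟩ | ⟨f', hs⟩ | ⟨f', hs⟩ <;>
        rcases hx with ⟨e', ht⟩ | ⟨e', ht⟩ | ⟨e', ht⟩ <;>
          first
            | linarith
            | (exfalso; rw [he] at e'; first | exact absurd e'.symm (by linarith) | linarith)
    · exact f
  · intro hf
    rcases hx2 with e | e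
    · exfalso
      rcases hx with ⟨e', ht⟩ | ⟨e', ht⟩ | ⟨e', ht⟩ <;>
        rcases hy with ⟨f', hs⟩ | ⟨f', hs⟩ | ⟨f', hs⟩ <;>
          first
            | linarith
            | (exfalso; rw [hf] at f'; first | exact absurd f'.symm (by linarith) | linarith)
    · exact e

lemma words_finite (a₁ a₂ : ℝ) :
    ∀ n : ℕ, {w : List ℝ | w.length = n ∧ isWord a₁ a₂ w}.Finite := by
  intro n
  induction n with
  | zero =>
    apply Set.Finite.subset (Set.finite_singleton ([] : List ℝ))
    rintro w ⟨h1, _⟩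
    simp [List.length_eq_zero_iff.mp h1]
  | succ m ih =>
    apply Set.Finite.subset (Set.Finite.image2 List.cons
      (Set.toFinite ({0, a₁, a₂} : Set ℝ)) ih)
    rintro w ⟨hlen, hword⟩
    cases w with
    | nil => simp at hlen
    | cons c l =>
      apply Set.mem_image2_of_mem
      · rcases hword c (by simp) with h | h | h <;> simp [h]
      · exact ⟨by simpa using hlen, fun d hd => hword d (by simp [hd])⟩

lemma memB_finite (β a₁ a₂ : ℝ) (n : ℕ) : {w : List ℝ | memB β a₁ a₂ n w}.Finite :=
  (words_finite a₁ a₂ n).subset fun w hw => ⟨hw.1, hw.2.1⟩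

lemma ncard_le_of_inj (S T : Set (List ℝ)) (hT : T.Finite) (f : List ℝ → List ℝ)
    (hinj : Set.InjOn f S) (him : f '' S ⊆ T) : S.ncard ≤ T.ncard := by
  rw [← Set.ncard_image_of_injOn hinj]
  exact Set.ncard_le_ncard him hT

lemma stepB (hβ1 : 1 < β) (hβ2 : β ≤ 2) (ha₁ : 0 < a₁) (h12 : a₁ < a₂)
    (h2β : a₂ < β * a₁) (n : ℕ) (hn : 1 ≤ n) :
    {w : List ℝ | memB β a₁ a₂ (n+1) w ∧ isBigB β a₁ a₂ w}.ncard ≤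
      {w : List ℝ | memB β a₁ a₂ n w}.ncard := by
  have hβ0 : (0:ℝ) < β := lt_trans one_pos hβ1
  apply ncard_le_of_inj _ _ (memB_finite β a₁ a₂ n) List.dropLast
  · rintro w₁ ⟨hw₁, hb₁⟩ w₂ ⟨hw₂, hb₂⟩ hdrop
    obtain ⟨t₁, hpar₁, ht₁, hv₁, hcl₁, hbig₁, _⟩ :=
      last_classify hβ1 hβ2 ha₁ h12 h2β hn hw₁
    obtain ⟨t₂, hpar₂, ht₂, hv₂, hcl₂, hbig₂, _⟩ :=
      last_classify hβ1 hβ2 ha₁ h12 h2β hn hw₂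
    have hteq : t₁ = t₂ := t_unique hβ0 ht₁ ht₂ (by rw [← hv₁, ← hv₂, hdrop])
    subst hteq
    have hl : w₁.getLastD 0 = w₂.getLastD 0 :=
      last_eq' hβ0 ha₁ h12 hcl₁ hcl₂ (hbig₁ hb₁) (hbig₂ hb₂)
    have hne₁ : w₁ ≠ [] := by
      intro h0; have := hw₁.1; rw [h0] at this; simp at this
    have hne₂ : w₂ ≠ [] := by
      intro h0; have := hw₂.1; rw [h0] at this; simp at this
    rw [← decomp_last hne₁, ← decomp_last hne₂, hdrop, hl]
  · rintro w ⟨v, ⟨hv, _⟩, rfl⟩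
    obtain ⟨t, hpar, _⟩ := last_classify hβ1 hβ2 ha₁ h12 h2β hn hv
    exact hpar

lemma stepA (hβ1 : 1 < β) (hβ2 : β ≤ 2) (ha₁ : 0 < a₁) (h12 : a₁ < a₂)
    (h2β : a₂ < β * a₁) (n : ℕ) (hn : 1 ≤ n) :
    {w : List ℝ | memB β a₁ a₂ (n+1) w}.ncard ≤
      {w : List ℝ | memB β a₁ a₂ n w}.ncard +
        {w : List ℝ | memB β a₁ a₂ n w ∧ isBigB β a₁ a₂ w}.ncard := by
  have hβ0 : (0:ℝ) < β := lt_trans one_pos hβ1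
  set E₁ := {w : List ℝ | memB β a₁ a₂ (n+1) w ∧ w.getLastD 0 ≠ a₂} with hE₁
  set E₂ := {w : List ℝ | memB β a₁ a₂ (n+1) w ∧ w.getLastD 0 = a₂} with hE₂
  have hsub : {w : List ℝ | memB β a₁ a₂ (n+1) w} ⊆ E₁ ∪ E₂ := by
    intro w hw
    by_cases h : w.getLastD 0 = a₂
    · exact Or.inr ⟨hw, h⟩
    · exact Or.inl ⟨hw, h⟩
  have hfin : (E₁ ∪ E₂).Finite :=
    Set.Finite.union ((memB_finite β a₁ a₂ (n+1)).subset fun w hw => hw.1)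
      ((memB_finite β a₁ a₂ (n+1)).subset fun w hw => hw.1)
  refine le_trans (Set.ncard_le_ncard hsub hfin)
    (le_trans (Set.ncard_union_le _ _) ?_)
  have h₁ : E₁.ncard ≤ {w : List ℝ | memB β a₁ a₂ n w}.ncard := by
    apply ncard_le_of_inj _ _ (memB_finite β a₁ a₂ n) List.dropLast
    · rintro w₁ ⟨hw₁, hb₁⟩ w₂ ⟨hw₂, hb₂⟩ hdrop
      obtain ⟨t₁, hpar₁, ht₁, hv₁, hcl₁, _, _⟩ :=
        last_classify hβ1 hβ2 ha₁ h12 h2β hn hw₁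
      obtain ⟨t₂, hpar₂, ht₂, hv₂, hcl₂, _, _⟩ :=
        last_classify hβ1 hβ2 ha₁ h12 h2β hn hw₂
      have hteq : t₁ = t₂ := t_unique hβ0 ht₁ ht₂ (by rw [← hv₁, ← hv₂, hdrop])
      subst hteq
      have hl : w₁.getLastD 0 = w₂.getLastD 0 :=
        last_eq hβ0 ha₁ h12 hcl₁ hcl₂ (iff_of_false hb₁ hb₂)
      have hne₁ : w₁ ≠ [] := by
        intro h0; have := hw₁.1; rw [h0] at this; simp at this
      have hne₂ : w₂ ≠ [] := by
        intro h0; have := hw₂.1; rw [h0] at this; simp at this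
      rw [← decomp_last hne₁, ← decomp_last hne₂, hdrop, hl]
    · rintro w ⟨v, ⟨hv, _⟩, rfl⟩
      obtain ⟨t, hpar, _⟩ := last_classify hβ1 hβ2 ha₁ h12 h2β hn hv
      exact hpar
  have h₂ : E₂.ncard ≤ {w : List ℝ | memB β a₁ a₂ n w ∧ isBigB β a₁ a₂ w}.ncard := by
    apply ncard_le_of_inj _ _
      ((memB_finite β a₁ a₂ n).subset fun w hw => hw.1) List.dropLast
    · rintro w₁ ⟨hw₁, hb₁⟩ w₂ ⟨hw₂, hb₂⟩ hdrop
      have hl : w₁.getLastD 0 = w₂.getLastD 0 := by rw [hb₁, hb₂]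
      have hne₁ : w₁ ≠ [] := by
        intro h0; have := hw₁.1; rw [h0] at this; simp at this
      have hne₂ : w₂ ≠ [] := by
        intro h0; have := hw₂.1; rw [h0] at this; simp at this
      rw [← decomp_last hne₁, ← decomp_last hne₂, hdrop, hl]
    · rintro w ⟨v, ⟨hv, hlast⟩, rfl⟩
      obtain ⟨t, hpar, ht0, hvvol, hcl, _, hbigpar⟩ :=
        last_classify hβ1 hβ2 ha₁ h12 h2β hn hv
      refine ⟨hpar, hbigpar ?_⟩
      rcases hcl with ⟨e, h⟩ | ⟨e, h⟩ | ⟨e, h⟩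
      · exfalso
        rw [hlast] at e
        exact (ha₁.trans h12).ne' e
      · exfalso
        rw [hlast] at e
        exact (ne_of_gt h12) e
      · exact h
  exact add_le_add h₁ h₂

lemma S1_sub (hβ1 : 1 < β) (ha₁ : 0 < a₁) (h12 : a₁ < a₂) :
    {w : List ℝ | memB β a₁ a₂ 1 w} ⊆ {[a₁], [a₂]} := by
  intro w hw
  obtain ⟨b, rfl⟩ := List.length_eq_one_iff.mp hw.1
  rcases hw.2.1 b (by simp) with hbe | hbe | hbe
  · exfalso
    apply hw.2.2.2.1
    rw [isFull, hbe, cyl_singleton, digit_zero, Real.volume_Ico]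
    norm_num
  · simp [hbe]
  · simp [hbe]

lemma base1 (hβ1 : 1 < β) (ha₁ : 0 < a₁) (h12 : a₁ < a₂) :
    {w : List ℝ | memB β a₁ a₂ 1 w}.ncard ≤ 2 := by
  refine le_trans (Set.ncard_le_ncard (S1_sub hβ1 ha₁ h12) (Set.toFinite _)) ?_
  refine le_trans (Set.ncard_insert_le _ _) ?_
  simp

lemma base2 (hβ1 : 1 < β) (hβ2 : β ≤ 2) (ha₁ : 0 < a₁) (h12 : a₁ < a₂)
    (h2β : a₂ < β * a₁) :
    {w : List ℝ | memB β a₁ a₂ 1 w ∧ isBigB β a₁ a₂ w}.ncard ≤ 1 := by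
  have hβ0 : (0:ℝ) < β := lt_trans one_pos hβ1
  have ha₂ : (0:ℝ) < a₂ := lt_trans ha₁ h12
  have hsub : {w : List ℝ | memB β a₁ a₂ 1 w ∧ isBigB β a₁ a₂ w} ⊆ {[a₂]} := by
    rintro w ⟨hw, hbig⟩
    have hmem := S1_sub hβ1 ha₁ h12 hw
    simp only [Set.mem_insert_iff, Set.mem_singleton_iff] at hmem
    rcases hmem with rfl | rfl
    · exfalso
      have hvol : volume (cyl β a₁ a₂ [a₁]) = ENNReal.ofReal (a₂/β - a₁/β) := by
        rw [cyl_singleton, digit_one ha₁.ne', Real.volume_Ico]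
      have s1 : (β-1)*a₂ ≤ a₂ := by nlinarith
      have s2 : β*(a₂ - a₁) ≤ a₂ := by nlinarith
      have hp : (β:ℝ)^(1+1) = β*β := by ring
      have h6 : a₂/β - a₁/β ≤ a₂/β^(1+1) := by
        rw [div_sub_div_same, hp, div_le_div_iff₀ hβ0 (by positivity)]
        nlinarith [mul_le_mul_of_nonneg_right s2 hβ0.le]
      have : ¬ isBigB β a₁ a₂ [a₁] := by
        rw [isBigB, hvol, List.length_singleton]
        exact not_lt.mpr (ENNReal.ofReal_le_ofReal h6)
      exact this hbig
    · rfl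
  refine le_trans (Set.ncard_le_ncard hsub (Set.toFinite _)) ?_
  simp

end Basic

/-- If moreover `1 < β ≤ 2`, then for every `n ≥ 1` one has
`κ(n) ≤ F(n+2)`, where `F` is the Fibonacci sequence. -/
theorem stmt6 (β a₁ a₂ : ℝ) (hβ1 : 1 < β) (hβ3 : β < 3) (hβ2 : β ≤ 2)
    (ha₁ : 0 < a₁) (h12 : a₁ < a₂) (hc : condition6 β a₁ a₂) :
    ∀ n : ℕ, 1 ≤ n → kappa β a₁ a₂ n ≤ Nat.fib (n + 2) := by
  have h2β : a₂ < β * a₁ := by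
    have h := hc.2
    rwa [min_eq_right hβ2, mul_comm] at h
  have main : ∀ m : ℕ, 1 ≤ m →
      {w : List ℝ | memB β a₁ a₂ m w}.ncard ≤ Nat.fib (m+2) ∧
      {w : List ℝ | memB β a₁ a₂ m w ∧ isBigB β a₁ a₂ w}.ncard ≤ Nat.fib (m+1) := by
    intro m hm
    induction m, hm using Nat.le_induction with
    | base =>
      constructor
      · exact le_trans (base1 hβ1 ha₁ h12) (by norm_num [Nat.fib])
      · exact le_trans (base2 hβ1 hβ2 ha₁ h12 h2β) (by norm_num [Nat.fib])
    | succ k hk ih =>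
      have hf : Nat.fib (k+1+2) = Nat.fib (k+1) + Nat.fib (k+2) := Nat.fib_add_two
      constructor
      · refine le_trans (stepA hβ1 hβ2 ha₁ h12 h2β k hk) ?_
        rw [hf]
        calc {w : List ℝ | memB β a₁ a₂ k w}.ncard +
              {w : List ℝ | memB β a₁ a₂ k w ∧ isBigB β a₁ a₂ w}.ncard
            ≤ Nat.fib (k+2) + Nat.fib (k+1) := add_le_add ih.1 ih.2
          _ = Nat.fib (k+1) + Nat.fib (k+2) := Nat.add_comm _ _
      · exact le_trans (stepB hβ1 hβ2 ha₁ h12 h2β k hk) ih.1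
  intro n hn
  exact (main n hn).1
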